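/- Let n have exactly two distinct prime factors p and q. Then every α ∈ V_n ∩ (ℤ_{≥0})^n can be written as Σ_{i=0}^{n_p-1} c_i v^(p)_i + Σ_{i=0}^{n_q-1} d_i v^(q)_i with non-negative integers c_i, d_i. -/

import Mathlib

/-- The `k`-th standard basis vector of `ℤ^n`. -/
def stdVec (n : ℕ) (k : ℕ) : Fin n → ℤ := fun m => if (m : ℕ) = k then 1 else 0

/-- `v^(d)_i = ∑_{j=0}^{d-1} e_{i + (n/d) j}` in `ℤ^n`. -/
def cycVec (n d : ℕ) (i : ℕ) : Fin n → ℤ := ∑ j ∈ Finset.range d, stdVec n (i + (n / d) * j)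

open Polynomial Module Submodule

lemma cycVec_apply {n r i : ℕ} (hr : 0 < r) (hdvd : r ∣ n) {nr : ℕ} (hnr : nr = n / r)
    (hi : i < nr) (m : Fin n) :
    cycVec n r i m = if (m : ℕ) % nr = i then 1 else 0 := by
  subst hnr
  have hnr : n / r * r = n := Nat.div_mul_cancel hdvd
  have hnr0 : 0 < n / r := lt_of_le_of_lt (Nat.zero_le _) hi
  simp only [cycVec, stdVec, Finset.sum_apply]
  by_cases h : (m : ℕ) % (n / r) = i
  · rw [if_pos h]
    have hdiv : (m : ℕ) / (n / r) < r := by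
      have : (m : ℕ) < n / r * r := by rw [hnr]; exact m.isLt
      exact Nat.div_lt_of_lt_mul this
    have hkey : ∀ j ∈ Finset.range r, (if (m : ℕ) = i + n / r * j then (1:ℤ) else 0)
        = if j = (m : ℕ) / (n / r) then 1 else 0 := by
      intro j _
      congr 1
      rw [eq_iff_iff]
      constructor
      · intro hm
        have : (m : ℕ) / (n / r) = (i + n / r * j) / (n / r) := by rw [hm]
        rw [this, Nat.add_mul_div_left _ _ hnr0, Nat.div_eq_of_lt hi, zero_add, eq_comm]
      · intro hj
        subst hj
        conv_lhs => rw [← Nat.div_add_mod (m : ℕ) (n / r)]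
        rw [h, add_comm]
    rw [Finset.sum_congr rfl hkey, Finset.sum_ite_eq' _ _ _]
    rw [if_pos (Finset.mem_range.mpr hdiv)]
  · rw [if_neg h]
    apply Finset.sum_eq_zero
    intro j _
    rw [if_neg]
    intro hm
    apply h
    rw [hm, Nat.add_mul_mod_self_left, Nat.mod_eq_of_lt hi]

lemma crt_aux {a b n : ℕ} (hn : 0 < n) (ha : a ∣ n) (hb : b ∣ n)
    {x y : ℕ} (hx : x < a) (hy : y < b) (h : x % Nat.gcd a b = y % Nat.gcd a b) :
    ∃ m, m < n ∧ m % a = x ∧ m % b = y := by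
  obtain ⟨k, hk1, hk2⟩ := Nat.chineseRemainder' (h : x ≡ y [MOD Nat.gcd a b])
  refine ⟨k % n, Nat.mod_lt _ hn, ?_, ?_⟩
  · have h1 : k % n ≡ k [MOD a] := (Nat.mod_modEq k n).of_dvd ha
    have := h1.trans hk1
    rwa [Nat.ModEq, Nat.mod_eq_of_lt hx] at this
  · have h1 : k % n ≡ k [MOD b] := (Nat.mod_modEq k n).of_dvd hb
    have := h1.trans hk2
    rwa [Nat.ModEq, Nat.mod_eq_of_lt hy] at this

open Polynomial Module Submodule

-- sum of ζ^m over a congruence class mod n/r is zero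
lemma fiber_sum_zero {n r : ℕ} (hn : 0 < n) (hr : 1 < r) (hdvd : r ∣ n)
    (ζ : ℂ) (hζ : IsPrimitiveRoot ζ n) {x : ℕ} (hx : x < n / r) :
    ∑ m ∈ (Finset.range n).filter (fun m => m % (n / r) = x), ζ ^ m = 0 := by
  have hnr : n / r * r = n := Nat.div_mul_cancel hdvd
  have hnr0 : 0 < n / r := Nat.div_pos (Nat.le_of_dvd hn hdvd) (lt_of_lt_of_le Nat.zero_lt_one hr.le)
  have hprim : IsPrimitiveRoot (ζ ^ (n / r)) r := hζ.pow hn hnr.symm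
  have hre : (Finset.range n).filter (fun m => m % (n / r) = x)
      = (Finset.range r).image (fun j => x + n / r * j) := by
    ext m
    simp only [Finset.mem_filter, Finset.mem_range, Finset.mem_image]
    constructor
    · rintro ⟨hm, hmod⟩
      refine ⟨m / (n / r), ?_, ?_⟩
      · apply Nat.div_lt_of_lt_mul; rwa [hnr]
      · conv_rhs => rw [← Nat.div_add_mod m (n / r)]
        rw [hmod]; ring
    · rintro ⟨j, hj, hjm⟩
      subst hjm
      constructor
      · have h1 : n / r * (j+1) ≤ n / r * r := Nat.mul_le_mul_left _ hj
        have h2 : n / r * (j+1) = n / r * j + n / r := by ring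
        omega
      · rw [Nat.add_mul_mod_self_left, Nat.mod_eq_of_lt hx]
  rw [hre, Finset.sum_image]
  · have : ∀ j ∈ Finset.range r, ζ ^ (x + n / r * j) = ζ ^ x * (ζ ^ (n / r)) ^ j := by
      intro j _; rw [pow_add, pow_mul]
    rw [Finset.sum_congr rfl this, ← Finset.mul_sum, hprim.geom_sum_eq_zero hr, mul_zero]
  · intro a _ b _ hab
    have := Nat.add_left_cancel hab
    exact Nat.eq_of_mul_eq_mul_left hnr0 this

open Polynomial Module Submodule

lemma powers_span {n : ℕ} (hn : 0 < n) (ζ : ℂ) (hζ : IsPrimitiveRoot ζ n) :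
    Submodule.span ℚ (Set.range fun m : Fin n => ζ ^ (m : ℕ))
      = Submodule.span ℚ (Set.range fun i : Fin (minpoly ℚ ζ).natDegree => ζ ^ (i : ℕ)) := by
  have hint : IsIntegral ℚ ζ := by
    refine ⟨X ^ n - 1, Polynomial.monic_X_pow_sub_C (1:ℚ) hn.ne', ?_⟩
    simp [hζ.pow_eq_one]
  have hD : (minpoly ℚ ζ).natDegree = n.totient := by
    rw [← Polynomial.cyclotomic_eq_minpoly_rat hζ hn, Polynomial.natDegree_cyclotomic]
  have hDpos : 0 < (minpoly ℚ ζ).natDegree := by rw [hD]; exact Nat.totient_pos.mpr hn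
  have hDn : (minpoly ℚ ζ).natDegree ≤ n := by rw [hD]; exact Nat.totient_le n
  have hmon : (minpoly ℚ ζ).Monic := minpoly.monic hint
  have hne1 : minpoly ℚ ζ ≠ 1 := by
    intro h; rw [h, Polynomial.natDegree_one] at hDpos; exact lt_irrefl 0 hDpos
  have pow_mem : ∀ k : ℕ, ζ ^ k ∈
      Submodule.span ℚ (Set.range fun i : Fin (minpoly ℚ ζ).natDegree => ζ ^ (i : ℕ)) := by
    intro k
    have h0 : aeval ζ (X ^ k %ₘ minpoly ℚ ζ) = ζ ^ k := by
      conv_rhs => rw [show (ζ ^ k : ℂ) = aeval ζ (X ^ k : ℚ[X]) by simp]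
      conv_rhs => rw [← Polynomial.modByMonic_add_div (X ^ k : ℚ[X]) (minpoly ℚ ζ)]
      rw [map_add, map_mul, minpoly.aeval, zero_mul, add_zero]
    have hdeg : (X ^ k %ₘ minpoly ℚ ζ).natDegree < (minpoly ℚ ζ).natDegree :=
      Polynomial.natDegree_modByMonic_lt _ hmon hne1
    rw [← h0, Polynomial.aeval_eq_sum_range' hdeg]
    apply Submodule.sum_mem
    intro i hi
    exact Submodule.smul_mem _ _ (Submodule.subset_span ⟨⟨i, Finset.mem_range.mp hi⟩, rfl⟩)
  apply le_antisymm
  · rw [Submodule.span_le]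
    rintro x ⟨m, rfl⟩
    exact pow_mem _
  · rw [Submodule.span_le]
    rintro x ⟨i, rfl⟩
    exact Submodule.subset_span ⟨⟨(i : ℕ), lt_of_lt_of_le i.2 hDn⟩, rfl⟩

lemma powers_finrank {n : ℕ} (hn : 0 < n) (ζ : ℂ) (hζ : IsPrimitiveRoot ζ n) :
    Module.finrank ℚ (Submodule.span ℚ (Set.range fun m : Fin n => ζ ^ (m : ℕ))) = n.totient := by
  rw [powers_span hn ζ hζ, finrank_span_eq_card (linearIndependent_pow ζ), Fintype.card_fin,
    ← Polynomial.cyclotomic_eq_minpoly_rat hζ hn, Polynomial.natDegree_cyclotomic]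

lemma n_struct {n p q : ℕ} (hn : 0 < n) (hp : p.Prime) (hq : q.Prime) (hne : p ≠ q)
    (hfac : n.primeFactors = {p, q}) : ∃ a b : ℕ, n = p ^ (a + 1) * q ^ (b + 1) := by
  have hpd : p ∣ n := Nat.dvd_of_mem_primeFactors (by rw [hfac]; simp)
  have hqd : q ∣ n := Nat.dvd_of_mem_primeFactors (by rw [hfac]; simp)
  have hap : 0 < n.factorization p := hp.factorization_pos_of_dvd hn.ne' hpd
  have hbq : 0 < n.factorization q := hq.factorization_pos_of_dvd hn.ne' hqd
  refine ⟨n.factorization p - 1, n.factorization q - 1, ?_⟩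
  rw [Nat.sub_add_cancel hap, Nat.sub_add_cancel hbq]
  conv_lhs => rw [← Nat.factorization_prod_pow_eq_self hn.ne']
  rw [Finsupp.prod, Nat.support_factorization, hfac, Finset.prod_pair hne]

lemma sum_smul_fiber_zero {n r : ℕ} (hn : 0 < n) (hr : 1 < r) (hdvd : r ∣ n)
    (ζ : ℂ) (hζ : IsPrimitiveRoot ζ n) (e : ℕ → ℚ) {nr : ℕ} (hnr : nr = n / r) :
    ∑ m : Fin n, e ((m : ℕ) % nr) • ζ ^ (m : ℕ) = 0 := by
  subst hnr
  rw [Fin.sum_univ_eq_sum_range (fun k => e (k % (n / r)) • ζ ^ k)]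
  rw [← Finset.sum_fiberwise_of_maps_to (g := fun k => k % (n / r)) (t := Finset.range (n / r))
    (fun x _ => Finset.mem_range.mpr (Nat.mod_lt _ (Nat.div_pos (Nat.le_of_dvd hn hdvd) (lt_trans one_pos hr))))]
  apply Finset.sum_eq_zero
  intro x hx
  have : ∀ k ∈ (Finset.range n).filter (fun k => k % (n / r) = x),
      e (k % (n / r)) • ζ ^ k = e x • ζ ^ k := by
    intro k hk
    rw [(Finset.mem_filter.mp hk).2]
  rw [Finset.sum_congr rfl this, ← Finset.smul_sum,
    fiber_sum_zero hn hr hdvd ζ hζ (Finset.mem_range.mp hx), smul_zero]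

theorem stmt8 (n p q : ℕ) (hn : 0 < n) (hp : p.Prime) (hq : q.Prime) (hne : p ≠ q)
    (hfac : n.primeFactors = {p, q})
    (ζ : ℂ) (hζ : IsPrimitiveRoot ζ n)
    (α : Fin n → ℤ) (hpos : ∀ m : Fin n, 0 ≤ α m)
    (hV : ∑ m : Fin n, (α m : ℂ) * ζ ^ (m : ℕ) = 0) :
    ∃ c d : ℕ → ℕ,
      α = ∑ i ∈ Finset.range (n / p), (c i : ℤ) • cycVec n p i
        + ∑ i ∈ Finset.range (n / q), (d i : ℤ) • cycVec n q i := by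
  classical
  obtain ⟨a, b, hnab⟩ := n_struct hn hp hq hne hfac
  have hp2 := hp.two_le
  have hq2 := hq.two_le
  have hqp : Nat.Coprime q p := (Nat.coprime_primes hq hp).mpr (Ne.symm hne)
  have hpn : p ∣ n := ⟨p ^ a * q ^ (b + 1), by rw [hnab]; ring⟩
  have hqn : q ∣ n := ⟨p ^ (a + 1) * q ^ b, by rw [hnab]; ring⟩
  set np := n / p with hnp_def
  set nq := n / q with hnq_def
  have hnpv : np = p ^ a * q ^ (b + 1) := by
    rw [hnp_def, hnab, show p ^ (a + 1) * q ^ (b + 1) = p * (p ^ a * q ^ (b + 1)) by ring]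
    exact Nat.mul_div_cancel_left _ hp.pos
  have hnqv : nq = p ^ (a + 1) * q ^ b := by
    rw [hnq_def, hnab, show p ^ (a + 1) * q ^ (b + 1) = q * (p ^ (a + 1) * q ^ b) by ring]
    exact Nat.mul_div_cancel_left _ hq.pos
  set g := Nat.gcd np nq with hg_def
  have hgv : g = p ^ a * q ^ b := by
    rw [hg_def, hnpv, hnqv, show p ^ a * q ^ (b + 1) = p ^ a * q ^ b * q by ring,
      show p ^ (a + 1) * q ^ b = p ^ a * q ^ b * p by ring, Nat.gcd_mul_left,
      Nat.Coprime.gcd_eq_one hqp, mul_one]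
  have hnp_pos : 0 < np := Nat.div_pos (Nat.le_of_dvd hn hpn) hp.pos
  have hnq_pos : 0 < nq := Nat.div_pos (Nat.le_of_dvd hn hqn) hq.pos
  have hg_pos : 0 < g := Nat.gcd_pos_of_pos_left _ hnp_pos
  have hnp_dvd : np ∣ n := Nat.div_dvd_of_dvd hpn
  have hnq_dvd : nq ∣ n := Nat.div_dvd_of_dvd hqn
  have hg_np : g ∣ np := Nat.gcd_dvd_left _ _
  have hg_nq : g ∣ nq := Nat.gcd_dvd_right _ _
  have hg_le_np : g ≤ np := Nat.le_of_dvd hnp_pos hg_np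
  have hg_le_nq : g ≤ nq := Nat.le_of_dvd hnq_pos hg_nq
  have hnp_le_n : np ≤ n := Nat.div_le_self _ _
  have hnq_le_n : nq ≤ n := Nat.div_le_self _ _
  -- CRT function
  have hCRT : ∀ x y : ℕ, ∃ m : Fin n, x < np → y < nq → x % g = y % g →
      ((m : ℕ) % np = x ∧ (m : ℕ) % nq = y) := by
    intro x y
    by_cases hc : x < np ∧ y < nq ∧ x % g = y % g
    · obtain ⟨m, hm, h1, h2⟩ := crt_aux hn hnp_dvd hnq_dvd hc.1 hc.2.1 hc.2.2
      exact ⟨⟨m, hm⟩, fun _ _ _ => ⟨h1, h2⟩⟩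
    · exact ⟨⟨0, hn⟩, fun h1 h2 h3 => absurd ⟨h1, h2, h3⟩ hc⟩
  choose M hM using hCRT
  -- the evaluation linear map
  set v : Fin n → ℂ := fun m => ζ ^ (m : ℕ) with hv
  set f := Fintype.linearCombination ℚ v with hf
  have hrank_ker : Module.finrank ℚ (LinearMap.ker f) + n.totient = n := by
    have h := LinearMap.finrank_range_add_finrank_ker f
    rw [Module.finrank_pi, Fintype.card_fin] at h
    have hr : Module.finrank ℚ (LinearMap.range f) = n.totient := by
      rw [hf, Fintype.range_linearCombination, hv]
      exact powers_finrank hn ζ hζ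
    omega
  -- the cycle-combination map
  set Φ : ((Fin np → ℚ) × (Fin nq → ℚ)) →ₗ[ℚ] (Fin n → ℚ) :=
    { toFun := fun cd => fun m => cd.1 ⟨(m : ℕ) % np, Nat.mod_lt _ hnp_pos⟩
        + cd.2 ⟨(m : ℕ) % nq, Nat.mod_lt _ hnq_pos⟩
      map_add' := fun u w => by funext m; simp only [Prod.fst_add, Prod.snd_add, Pi.add_apply]; ring
      map_smul' := fun r u => by
        funext m
        simp only [Prod.smul_fst, Prod.smul_snd, Pi.smul_apply, RingHom.id_apply, smul_eq_mul]
        ring } with hΦ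
  have hΦ_apply : ∀ (cd : (Fin np → ℚ) × (Fin nq → ℚ)) (m : Fin n),
      Φ cd m = cd.1 ⟨(m : ℕ) % np, Nat.mod_lt _ hnp_pos⟩
        + cd.2 ⟨(m : ℕ) % nq, Nat.mod_lt _ hnq_pos⟩ := fun _ _ => rfl
  have hΦ_ker : LinearMap.range Φ ≤ LinearMap.ker f := by
    rintro w ⟨cd, rfl⟩
    rw [LinearMap.mem_ker, hf, Fintype.linearCombination_apply]
    have hsplit : ∀ m : Fin n, Φ cd m • v m
        = ((fun k => if h : k < np then cd.1 ⟨k, h⟩ else 0) ((m : ℕ) % np)) • ζ ^ (m : ℕ)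
          + ((fun k => if h : k < nq then cd.2 ⟨k, h⟩ else 0) ((m : ℕ) % nq)) • ζ ^ (m : ℕ) := by
      intro m
      rw [hΦ_apply, hv]
      simp only [dif_pos (Nat.mod_lt (m : ℕ) hnp_pos), dif_pos (Nat.mod_lt (m : ℕ) hnq_pos)]
      rw [add_smul]
    have h1 := sum_smul_fiber_zero hn hp.one_lt hpn ζ hζ
      (fun k => if h : k < np then cd.1 ⟨k, h⟩ else 0) hnp_def
    have h2 := sum_smul_fiber_zero hn hq.one_lt hqn ζ hζ
      (fun k => if h : k < nq then cd.2 ⟨k, h⟩ else 0) hnq_def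
    rw [Finset.sum_congr rfl (fun m _ => hsplit m), Finset.sum_add_distrib, h1, h2, add_zero]
  have harith : np + nq + n.totient = n + g := by
    obtain ⟨pp, hpp⟩ : ∃ pp, p = pp + 1 := ⟨p - 1, by omega⟩
    obtain ⟨qq, hqq⟩ : ∃ qq, q = qq + 1 := ⟨q - 1, by omega⟩
    have htot : n.totient = p ^ a * pp * (q ^ b * qq) := by
      rw [hnab, Nat.totient_mul (Nat.Coprime.pow _ _ ((Nat.coprime_primes hp hq).mpr hne)),
        Nat.totient_prime_pow hp (Nat.succ_pos a), Nat.totient_prime_pow hq (Nat.succ_pos b)]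
      simp only [Nat.succ_sub_one, Nat.add_sub_cancel, hpp, hqq]
    rw [hnpv, hnqv, hgv, htot, hnab, hpp, hqq]
    ring
  have hkerΦ_rank : Module.finrank ℚ (LinearMap.ker Φ) ≤ g := by
    set ι : LinearMap.ker Φ →ₗ[ℚ] (Fin g → ℚ) :=
      { toFun := fun u => fun r => u.1.1 ⟨(r : ℕ), lt_of_lt_of_le r.2 hg_le_np⟩
        map_add' := fun u w => rfl
        map_smul' := fun r u => rfl } with hι
    have hmm : ∀ t : ℕ, t % g % g = t % g := fun t => Nat.mod_mod_of_dvd t (dvd_refl g)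
    have hinj : Function.Injective ι := by
      rw [← LinearMap.ker_eq_bot, Submodule.eq_bot_iff]
      rintro ⟨⟨cc, dd⟩, hker⟩ hu
      have hz : ∀ m : Fin n, cc ⟨(m : ℕ) % np, Nat.mod_lt _ hnp_pos⟩
          + dd ⟨(m : ℕ) % nq, Nat.mod_lt _ hnq_pos⟩ = 0 := by
        intro m
        have := congrFun (hker : Φ (cc, dd) = 0) m
        rwa [hΦ_apply] at this
      have hpair : ∀ x : Fin np, ∀ y : Fin nq, (x : ℕ) % g = (y : ℕ) % g → cc x + dd y = 0 := by
        intro x y hxy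
        obtain ⟨h1, h2⟩ := hM (x : ℕ) (y : ℕ) x.2 y.2 hxy
        have h0 := hz (M (x : ℕ) (y : ℕ))
        have e1 : (⟨(M (x : ℕ) (y : ℕ) : ℕ) % np, Nat.mod_lt _ hnp_pos⟩ : Fin np) = x :=
          Fin.ext h1
        have e2 : (⟨(M (x : ℕ) (y : ℕ) : ℕ) % nq, Nat.mod_lt _ hnq_pos⟩ : Fin nq) = y :=
          Fin.ext h2
        rwa [e1, e2] at h0
      have hcc0 : ∀ t : ℕ, ∀ ht : t < g, cc ⟨t, lt_of_lt_of_le ht hg_le_np⟩ = 0 := by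
        intro t ht
        exact congrFun hu ⟨t, ht⟩
      have hccall : ∀ x : Fin np, cc x = 0 := by
        intro x
        have hrg : (x : ℕ) % g < g := Nat.mod_lt _ hg_pos
        have h1 := hpair x ⟨(x : ℕ) % g, lt_of_lt_of_le hrg hg_le_nq⟩ (hmm _).symm
        have h2 := hpair ⟨(x : ℕ) % g, lt_of_lt_of_le hrg hg_le_np⟩
          ⟨(x : ℕ) % g, lt_of_lt_of_le hrg hg_le_nq⟩ rfl
        have h3 := hcc0 _ hrg
        linarith
      have hddall : ∀ y : Fin nq, dd y = 0 := by
        intro y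
        have hrg : (y : ℕ) % g < g := Nat.mod_lt _ hg_pos
        have h1 := hpair ⟨(y : ℕ) % g, lt_of_lt_of_le hrg hg_le_np⟩ y (hmm _)
        have h3 := hcc0 _ hrg
        linarith
      apply Subtype.ext
      show (cc, dd) = 0
      rw [Prod.ext_iff]
      constructor
      · funext x; exact hccall x
      · funext y; exact hddall y
    calc Module.finrank ℚ (LinearMap.ker Φ) ≤ Module.finrank ℚ (Fin g → ℚ) :=
          LinearMap.finrank_le_finrank_of_injective hinj
      _ = g := by rw [Module.finrank_pi, Fintype.card_fin]
  have hrangeΦ : Module.finrank ℚ (LinearMap.range Φ) + Module.finrank ℚ (LinearMap.ker Φ)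
      = np + nq := by
    have h := LinearMap.finrank_range_add_finrank_ker Φ
    rwa [Module.finrank_prod, Module.finrank_pi, Module.finrank_pi, Fintype.card_fin,
      Fintype.card_fin] at h
  have heq : LinearMap.range Φ = LinearMap.ker f := by
    apply Submodule.eq_of_le_of_finrank_le hΦ_ker
    omega
  have hαmem : (fun m : Fin n => (α m : ℚ)) ∈ LinearMap.ker f := by
    rw [LinearMap.mem_ker, hf, Fintype.linearCombination_apply, ← hV]
    apply Finset.sum_congr rfl
    intro m _
    rw [hv, Rat.smul_def]
    push_cast
    ring
  rw [← heq] at hαmem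
  obtain ⟨⟨c₀, d₀⟩, hcd⟩ := hαmem
  have hrep : ∀ m : Fin n, (α m : ℚ) = c₀ ⟨(m : ℕ) % np, Nat.mod_lt _ hnp_pos⟩
      + d₀ ⟨(m : ℕ) % nq, Nat.mod_lt _ hnq_pos⟩ := by
    intro m
    have h := congrFun hcd m
    rw [hΦ_apply] at h
    exact h.symm
  have KEY : ∀ m1 m2 m3 m4 : Fin n, (m1 : ℕ) % np = (m2 : ℕ) % np →
      (m3 : ℕ) % np = (m4 : ℕ) % np → (m1 : ℕ) % nq = (m3 : ℕ) % nq →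
      (m2 : ℕ) % nq = (m4 : ℕ) % nq → α m1 + α m4 = α m2 + α m3 := by
    intro m1 m2 m3 m4 h12 h34 h13 h24
    have e12 : (⟨(m1 : ℕ) % np, Nat.mod_lt _ hnp_pos⟩ : Fin np)
        = ⟨(m2 : ℕ) % np, Nat.mod_lt _ hnp_pos⟩ := Fin.ext h12
    have e34 : (⟨(m3 : ℕ) % np, Nat.mod_lt _ hnp_pos⟩ : Fin np)
        = ⟨(m4 : ℕ) % np, Nat.mod_lt _ hnp_pos⟩ := Fin.ext h34
    have e13 : (⟨(m1 : ℕ) % nq, Nat.mod_lt _ hnq_pos⟩ : Fin nq)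
        = ⟨(m3 : ℕ) % nq, Nat.mod_lt _ hnq_pos⟩ := Fin.ext h13
    have e24 : (⟨(m2 : ℕ) % nq, Nat.mod_lt _ hnq_pos⟩ : Fin nq)
        = ⟨(m4 : ℕ) % nq, Nat.mod_lt _ hnq_pos⟩ := Fin.ext h24
    have hQ : (α m1 : ℚ) + α m4 = α m2 + α m3 := by
      rw [hrep m1, hrep m2, hrep m3, hrep m4, e12, e34, e13, e24]
      ring
    exact_mod_cast hQ
  have hmins : ∀ r : ℕ, ∃ m0 : Fin n, r < nq → (((m0 : ℕ) % nq = r) ∧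
      ∀ m' : Fin n, (m' : ℕ) % nq = r → α m0 ≤ α m') := by
    intro r
    by_cases hr : r < nq
    · have hne' : (Finset.univ.filter (fun m : Fin n => (m : ℕ) % nq = r)).Nonempty := by
        refine ⟨⟨r, lt_of_lt_of_le hr hnq_le_n⟩, ?_⟩
        simp [Nat.mod_eq_of_lt hr]
      obtain ⟨m0, hm0mem, hm0min⟩ := Finset.exists_min_image _ α hne'
      exact ⟨m0, fun _ => ⟨(Finset.mem_filter.mp hm0mem).2,
        fun m' hm' => hm0min m' (Finset.mem_filter.mpr ⟨Finset.mem_univ _, hm'⟩)⟩⟩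
    · exact ⟨⟨0, hn⟩, fun h => absurd h hr⟩
  choose mstar hmstar using hmins
  set cfun : ℕ → ℕ := fun x => (α (M x (x % g)) - α (mstar (x % g))).toNat with hcfun
  set dfun : ℕ → ℕ := fun y => (α (M (((mstar (y % g) : Fin n) : ℕ) % np) y)).toNat with hdfun
  refine ⟨cfun, dfun, ?_⟩
  funext m
  have hsum1 : (∑ i ∈ Finset.range np, (cfun i : ℤ) • cycVec n p i) m
      = (cfun ((m : ℕ) % np) : ℤ) := by
    rw [Finset.sum_apply]
    have hterm : ∀ i ∈ Finset.range np, ((cfun i : ℤ) • cycVec n p i) m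
        = if ((m : ℕ) % np) = i then (cfun i : ℤ) else 0 := by
      intro i hi
      rw [Pi.smul_apply, smul_eq_mul,
        cycVec_apply hp.pos hpn hnp_def (Finset.mem_range.mp hi) m]
      simp [mul_ite]
    rw [Finset.sum_congr rfl hterm, Finset.sum_ite_eq (Finset.range np) ((m : ℕ) % np)
      (fun i => (cfun i : ℤ)), if_pos (Finset.mem_range.mpr (Nat.mod_lt _ hnp_pos))]
  have hsum2 : (∑ i ∈ Finset.range nq, (dfun i : ℤ) • cycVec n q i) m
      = (dfun ((m : ℕ) % nq) : ℤ) := by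
    rw [Finset.sum_apply]
    have hterm : ∀ i ∈ Finset.range nq, ((dfun i : ℤ) • cycVec n q i) m
        = if ((m : ℕ) % nq) = i then (dfun i : ℤ) else 0 := by
      intro i hi
      rw [Pi.smul_apply, smul_eq_mul,
        cycVec_apply hq.pos hqn hnq_def (Finset.mem_range.mp hi) m]
      simp [mul_ite]
    rw [Finset.sum_congr rfl hterm, Finset.sum_ite_eq (Finset.range nq) ((m : ℕ) % nq)
      (fun i => (dfun i : ℤ)), if_pos (Finset.mem_range.mpr (Nat.mod_lt _ hnq_pos))]
  rw [Pi.add_apply, hsum1, hsum2]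
  set x := (m : ℕ) % np with hx
  set y := (m : ℕ) % nq with hy
  set r := (m : ℕ) % g with hr0
  have hxg : x % g = r := by rw [hx, hr0]; exact Nat.mod_mod_of_dvd _ hg_np
  have hyg : y % g = r := by rw [hy, hr0]; exact Nat.mod_mod_of_dvd _ hg_nq
  have hxlt : x < np := Nat.mod_lt _ hnp_pos
  have hylt : y < nq := Nat.mod_lt _ hnq_pos
  have hrg : r < g := Nat.mod_lt _ hg_pos
  have hrnq : r < nq := lt_of_lt_of_le hrg hg_le_nq
  obtain ⟨hM1p, hM1q⟩ := hM x r hxlt hrnq (by rw [hxg, Nat.mod_eq_of_lt hrg])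
  obtain ⟨hmsq, hmsmin⟩ := hmstar r hrnq
  have hx'lt : ((mstar r : Fin n) : ℕ) % np < np := Nat.mod_lt _ hnp_pos
  have hmsg : ((mstar r : Fin n) : ℕ) % g = r := by
    conv_lhs => rw [← Nat.mod_mod_of_dvd _ hg_nq, hmsq]
    exact Nat.mod_eq_of_lt hrg
  have hx'g : ((mstar r : Fin n) : ℕ) % np % g = y % g := by
    rw [Nat.mod_mod_of_dvd _ hg_np, hmsg, hyg]
  obtain ⟨hM2p, hM2q⟩ := hM _ y hx'lt hylt hx'g
  have hkey := KEY m (M x r) (M (((mstar r : Fin n) : ℕ) % np) y) (mstar r)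
    (by rw [hM1p]) (by rw [hM2p]) (by rw [hM2q]) (by rw [hM1q, hmsq])
  have hcx : (cfun x : ℤ) = α (M x r) - α (mstar r) := by
    simp only [hcfun, hxg]
    exact Int.toNat_of_nonneg (by have := hmsmin (M x r) hM1q; omega)
  have hdy : (dfun y : ℤ) = α (M (((mstar r : Fin n) : ℕ) % np) y) := by
    simp only [hdfun, hyg]
    exact Int.toNat_of_nonneg (hpos _)
  rw [hcx, hdy]
  omega
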